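/- Let C be a pure normal simplicial complex of dimension d−1, let S be a nonempty set of vertices of C, and let F0 be an ordered facet of C whose ordering is admissible with respect to S. Then there exists a monotone conservative path towards S that starts at F0 and ends in a facet that intersects S. -/

import Mathlib

/-! Common definitions: pure simplicial complexes (represented by their facet sets),
vertex-distance, links, ordered facets, vectors of distances, admissibility, and
monotone/conservative dual paths, following Adiprasito–Benedetti's combinatorial
segments. -/

open scoped Classical

noncomputable section

namespace MCP

variable {V : Type} [DecidableEq V] [Fintype V]

/-- The vertex set of the complex whose set of facets is `C`. -/
def verts (C : Finset (Finset V)) : Finset V := C.sup id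

/-- `f` is a face of the pure complex with facet set `C`. -/
def IsFace (C : Finset (Finset V)) (f : Finset V) : Prop := ∃ F ∈ C, f ⊆ F

/-- `C` is pure of dimension `d - 1`: every facet has `d` vertices. -/
def Pure (C : Finset (Finset V)) (d : ℕ) : Prop := ∀ F ∈ C, F.card = d

/-- The 1-skeleton of the complex: two vertices are joined iff they lie in a common facet. -/
def skeleton (C : Finset (Finset V)) : SimpleGraph V where
  Adj u v := u ≠ v ∧ ∃ F ∈ C, u ∈ F ∧ v ∈ F
  symm := ⟨by
    rintro u v ⟨h, F, hF, hu, hv⟩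
    exact ⟨h.symm, F, hF, hv, hu⟩⟩
  loopless := ⟨by rintro u ⟨h, -⟩; exact h rfl⟩

/-- Two facets are adjacent in the dual graph iff they differ in a single vertex. -/
def AdjFacets (F G : Finset V) : Prop :=
  F ≠ G ∧ F.card = G.card ∧ (F ∩ G).card + 1 = F.card

/-- A dual path: a list of facets of `C` in which consecutive facets are adjacent. -/
def IsDualPath (C : Finset (Finset V)) (P : List (Finset V)) : Prop :=
  (∀ F ∈ P, F ∈ C) ∧ P.Chain' AdjFacets

/-- `C` is normal: for every face `f`, any two facets containing `f` are joined by a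
dual path all of whose facets contain `f`. -/
def Normal (C : Finset (Finset V)) : Prop :=
  ∀ f : Finset V, ∀ F ∈ C, ∀ G ∈ C, f ⊆ F → f ⊆ G →
    ∃ P : List (Finset V), P.head? = some F ∧ P.getLast? = some G ∧
      (∀ H ∈ P, H ∈ C ∧ f ⊆ H) ∧ P.Chain' AdjFacets

/-- The (facet set of the) link of a vertex `x` in `C`. -/
def link (C : Finset (Finset V)) (x : V) : Finset (Finset V) :=
  (C.filter (fun F => x ∈ F)).image (fun F => F.erase x)

/-- Vertex-distance (in the 1-skeleton) between two sets of vertices, with value `⊤`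
if one of the sets is empty, and with the special `0/1` convention when the complex
is `0`-dimensional. -/
def vdistSets (C : Finset (Finset V)) (S T : Finset V) : ℕ∞ :=
  if C.sup Finset.card ≤ 1 then
    (if S.Nonempty ∧ T.Nonempty then (if (S ∩ T).Nonempty then 0 else 1) else ⊤)
  else ⨅ u ∈ S, ⨅ v ∈ T, (skeleton C).edist u v

/-- The derived target set `S'` in the link of `x`, used in the recursive definitions
of the vector of distances and of admissibility. -/
def targetSet (C : Finset (Finset V)) (x : V) (S : Finset V) : Finset V :=
  if x ∈ S then S ∩ verts (link C x)
  else (verts (link C x)).filter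
    (fun w => vdistSets C {w} S + 1 = vdistSets C {x} S)

/-- The vector of distances from an ordered facet (a list of vertices) to a target set. -/
def distVector : Finset (Finset V) → List V → Finset V → List ℕ∞
  | _, [], _ => []
  | C, x :: rest, S => vdistSets C {x} S :: distVector (link C x) rest (targetSet C x S)

/-- Admissibility of an ordering of a facet with respect to a target set: the first
vertex realizes the vertex-distance from the facet to the target set, and recursively
in the link. -/
def Admissible : Finset (Finset V) → List V → Finset V → Prop
  | _, [], _ => True
  | C, x :: rest, S =>
      vdistSets C {x} S = vdistSets C (x :: rest).toFinset S ∧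
      Admissible (link C x) rest (targetSet C x S)

/-- An ordered facet of `C`: a repetition-free list of vertices forming a facet. -/
def IsOrderedFacet (C : Finset (Finset V)) (L : List V) : Prop :=
  L.Nodup ∧ L.toFinset ∈ C

/-- A dual path of ordered facets. -/
def IsOrderedDualPath (C : Finset (Finset V)) (Γ : List (List V)) : Prop :=
  (∀ L ∈ Γ, IsOrderedFacet C L) ∧
  Γ.Chain' (fun L M => AdjFacets L.toFinset M.toFinset)

/-- A path of ordered facets is monotone towards `S` if its vectors of distances are
strictly lexicographically decreasing. -/
def MonotonePath (C : Finset (Finset V)) (S : Finset V) (Γ : List (List V)) : Prop :=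
  Γ.Chain' (fun L M => List.Lex (· < ·) (distVector C M S) (distVector C L S))

/-- The index of a step: the least position at which the two orderings differ. -/
def stepIndex (L M : List V) : ℕ := sInf {k : ℕ | L[k]? ≠ M[k]?}

/-- The step from `L` to `M` is conservative towards `S`: the removed vertex is the last
vertex of `L`, and `M` is admissibly ordered with maximum index among all admissible
reorderings. -/
def ConservativeStep (C : Finset (Finset V)) (S : Finset V) (L M : List V) : Prop :=
  (∃ x, L.getLast? = some x ∧ L.toFinset \ M.toFinset = {x}) ∧
  Admissible C M S ∧
  ∀ M' : List V, M'.Perm M → Admissible C M' S → stepIndex L M' ≤ stepIndex L M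

/-- A path of ordered facets is conservative towards `S` if its first facet is
admissibly ordered and every step is conservative. -/
def ConservativePath (C : Finset (Finset V)) (S : Finset V) (Γ : List (List V)) : Prop :=
  (∀ L ∈ Γ.head?, Admissible C L S) ∧ Γ.Chain' (ConservativeStep C S)

/-- A monotone conservative dual path of ordered facets towards `S`. -/
def MonoConsPath (C : Finset (Finset V)) (S : Finset V) (Γ : List (List V)) : Prop :=
  IsOrderedDualPath C Γ ∧ MonotonePath C S Γ ∧ ConservativePath C S Γ

/-- The path `Γ` starts at the facet `F`. -/
def StartsAt (Γ : List (List V)) (F : Finset V) : Prop :=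
  ∃ L, Γ.head? = some L ∧ L.toFinset = F

/-- The path `Γ` ends at the facet `F`. -/
def EndsAt (Γ : List (List V)) (F : Finset V) : Prop :=
  ∃ L, Γ.getLast? = some L ∧ L.toFinset = F

/-- `C` is flag: every set of vertices of `C` pairwise joined by edges of `C` is a face. -/
def Flag (C : Finset (Finset V)) : Prop :=
  ∀ T : Finset V, T ⊆ verts C →
    (∀ u ∈ T, ∀ v ∈ T, u ≠ v → (skeleton C).Adj u v) → IsFace C T

/-- A critical clique: a clique of the 1-skeleton that becomes a face after removing a
suitable vertex. -/
def CriticalClique (C : Finset (Finset V)) (T : Finset V) : Prop :=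
  (∀ u ∈ T, ∀ v ∈ T, u ≠ v → (skeleton C).Adj u v) ∧ ∃ v ∈ T, IsFace C (T.erase v)

/-- `C` is `k`-banner: every critical clique with at least `k + 1` vertices is a face. -/
def Banner (C : Finset (Finset V)) (k : ℕ) : Prop :=
  ∀ T : Finset V, CriticalClique C T → k + 1 ≤ T.card → IsFace C T

/-- A pure `(d-1)`-complex is a pseudomanifold (possibly with boundary) if every
`(d-2)`-dimensional face lies in at most two facets. -/
def Pseudomanifold (C : Finset (Finset V)) (d : ℕ) : Prop :=
  ∀ f : Finset V, f.card + 1 = d → IsFace C f → (C.filter (fun F => f ⊆ F)).card ≤ 2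

/-- A pure `(d-1)`-complex is a pseudomanifold without boundary if every
`(d-2)`-dimensional face lies in exactly two facets. -/
def PseudomanifoldNoBoundary (C : Finset (Finset V)) (d : ℕ) : Prop :=
  ∀ f : Finset V, f.card + 1 = d → IsFace C f → (C.filter (fun F => f ⊆ F)).card = 2

/-- The join of two complexes (given by their facet sets, on disjoint vertex sets). -/
def join (C₁ C₂ : Finset (Finset V)) : Finset (Finset V) :=
  (C₁ ×ˢ C₂).image (fun p => p.1 ∪ p.2)

/-- The one-point-suspension of `C` at the vertex `v`; the two new suspension vertices
are `Sum.inr false` and `Sum.inr true`. -/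
def ops (C : Finset (Finset V)) (v : V) : Finset (Finset (V ⊕ Bool)) :=
  ((C.filter (fun F => v ∈ F)).image
      (fun F => ((F.erase v).image Sum.inl) ∪ {Sum.inr false, Sum.inr true}))
  ∪ ((C.filter (fun F => v ∉ F)).image (fun F => (F.image Sum.inl) ∪ {Sum.inr false}))
  ∪ ((C.filter (fun F => v ∉ F)).image (fun F => (F.image Sum.inl) ∪ {Sum.inr true}))

/-- The degree of a vertex in the 1-skeleton of `C`. -/
def degree (C : Finset (Finset V)) (x : V) : ℕ :=
  (Finset.univ.filter fun w => (skeleton C).Adj x w).card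

/-- Vertex-decomposability of a pure complex given by its facet set: either a single
simplex, or there is a vertex whose deletion stays pure of the same dimension and whose
link and deletion are both vertex-decomposable.  (The condition
`∀ F ∈ C, ∃ G ∈ C, x ∉ G ∧ F.erase x ⊆ G` expresses that the deletion of `x` is pure
of the same dimension, so that its facets are the facets of `C` avoiding `x`.) -/
inductive VertexDecomposable : Finset (Finset V) → Prop
  | simplex (F : Finset V) : VertexDecomposable {F}
  | step (C : Finset (Finset V)) (x : V) (hx : x ∈ verts C)
      (hdelpure : ∀ F ∈ C, ∃ G ∈ C, x ∉ G ∧ F.erase x ⊆ G)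
      (hlink : VertexDecomposable (link C x))
      (hdel : VertexDecomposable (C.filter (fun F => x ∉ F))) :
      VertexDecomposable C

/-- The maximum length (number of steps) of a monotone conservative path in `C`, over
all nonempty target sets of vertices of `C`. -/
def maxl (C : Finset (Finset V)) : ℕ :=
  sSup {n : ℕ | ∃ (S : Finset V) (Γ : List (List V)), S.Nonempty ∧ S ⊆ verts C ∧
    MonoConsPath C S Γ ∧ Γ.length = n + 1}

/-- `CombSeg C Γ S x₀`: the dual path `Γ` is a combinatorial segment in `C` from its
first facet to the target set `S`, anchored at `x₀` (Adiprasito–Benedetti). -/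
inductive CombSeg : Finset (Finset V) → List (Finset V) → Finset V → V → Prop
  | intersects (C : Finset (Finset V)) (F S : Finset V) (x₀ : V)
      (hF : F ∈ C) (hx : x₀ ∈ F) (hFS : (F ∩ S).Nonempty) :
      CombSeg C [F] S x₀
  | dimOne (C : Finset (Finset V)) (S : Finset V) (x₀ v : V)
      (hdim : ∀ F ∈ C, F.card = 1)
      (h₁ : {x₀} ∈ C) (h₂ : {v} ∈ C) (hx : x₀ ∉ S) (hv : v ∈ S) :
      CombSeg C [{x₀}, {v}] S x₀
  | step (C : Finset (Finset V)) (F₀ : Finset V) (Γ₁ Γ₂ : List (Finset V))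
      (Fk S : Finset V) (x₀ y x₀' : V) (ℓ : ℕ∞)
      (hdim : ∀ F ∈ C, 2 ≤ F.card)
      (hmem : ∀ F ∈ F₀ :: Γ₁, F ∈ C)
      (hdisj : ∀ F ∈ F₀ :: Γ₁, F ∩ S = ∅)
      (hℓ : vdistSets C F₀ S = ℓ)
      (hbefore : ∀ F ∈ F₀ :: Γ₁, ¬ vdistSets C F S < ℓ)
      (hafter : vdistSets C Fk S < ℓ)
      (hy : y ∈ Fk)
      (hyd : vdistSets C {y} S + 1 = ℓ)
      (hyuniq : ∀ z ∈ Fk, vdistSets C {z} S + 1 = ℓ → z = y)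
      (hx₀ : ∀ F ∈ F₀ :: Γ₁, x₀ ∈ F) (hx₀k : x₀ ∈ Fk)
      (hlink : CombSeg (link C x₀)
          (((F₀ :: Γ₁) ++ [Fk]).map (fun F => F.erase x₀))
          ((verts (link C x₀)).filter (fun w => vdistSets C {w} S + 1 = ℓ)) x₀')
      (htail : CombSeg C (Fk :: Γ₂) S y) :
      CombSeg C (F₀ :: Γ₁ ++ Fk :: Γ₂) S x₀

end MCP

namespace MCP

variable {V : Type} [DecidableEq V] [Fintype V]

set_option linter.unusedSectionVars false

/-! ### Auxiliary lemmas -/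

lemma mem_verts {C : Finset (Finset V)} {v : V} :
    v ∈ verts C ↔ ∃ F ∈ C, v ∈ F := by
  simp [verts, Finset.mem_sup, id]

lemma mem_link {C : Finset (Finset V)} {x : V} {G : Finset V} :
    G ∈ link C x ↔ ∃ F ∈ C, x ∈ F ∧ F.erase x = G := by
  simp [link, Finset.mem_image, Finset.mem_filter, and_assoc]

lemma not_mem_of_mem_link {C : Finset (Finset V)} {x : V} {G : Finset V}
    (h : G ∈ link C x) : x ∉ G := by
  obtain ⟨F, _, _, rfl⟩ := mem_link.mp h
  simp

lemma insert_mem_of_mem_link {C : Finset (Finset V)} {x : V} {G : Finset V}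
    (h : G ∈ link C x) : insert x G ∈ C := by
  obtain ⟨F, hF, hx, rfl⟩ := mem_link.mp h
  rwa [Finset.insert_erase hx]

lemma mem_link_of_mem {C : Finset (Finset V)} {x : V} {F : Finset V}
    (hF : F ∈ C) (hx : x ∈ F) : F.erase x ∈ link C x :=
  mem_link.mpr ⟨F, hF, hx, rfl⟩

lemma pure_link {C : Finset (Finset V)} {d : ℕ} (hpure : Pure C d) (x : V) :
    Pure (link C x) (d - 1) := by
  intro G hG
  obtain ⟨F, hF, hx, rfl⟩ := mem_link.mp hG
  rw [Finset.card_erase_of_mem hx, hpure F hF]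

lemma chain'_map_mem {α β : Type*} {R : α → α → Prop} {S : β → β → Prop} (f : α → β)
    {l : List α} (H : ∀ a ∈ l, ∀ b ∈ l, R a b → S (f a) (f b)) (h : l.Chain' R) :
    (l.map f).Chain' S := by
  induction l with
  | nil => exact List.isChain_nil
  | cons a t ih =>
    cases t with
    | nil => exact List.isChain_singleton _
    | cons b t' =>
      rw [List.Chain', List.isChain_cons_cons] at h
      rw [List.map_cons, List.map_cons, List.Chain', List.isChain_cons_cons]
      refine ⟨H a (by simp) b (by simp) h.1, ?_⟩
      rw [← List.map_cons]
      exact ih (fun u hu v hv => H u (by simp [List.mem_cons] at hu ⊢; tauto)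
        v (by simp [List.mem_cons] at hv ⊢; tauto)) h.2

lemma adjFacets_erase {x : V} {F G : Finset V} (hxF : x ∈ F) (hxG : x ∈ G)
    (h : AdjFacets F G) : AdjFacets (F.erase x) (G.erase x) := by
  obtain ⟨hne, hcard, hint⟩ := h
  have hx : x ∈ F ∩ G := Finset.mem_inter.mpr ⟨hxF, hxG⟩
  have hiE : F.erase x ∩ G.erase x = (F ∩ G).erase x := by
    ext a; simp only [Finset.mem_inter, Finset.mem_erase]; tauto
  refine ⟨?_, ?_, ?_⟩
  · intro he
    apply hne
    rw [← Finset.insert_erase hxF, ← Finset.insert_erase hxG, he]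
  · rw [Finset.card_erase_of_mem hxF, Finset.card_erase_of_mem hxG, hcard]
  · rw [hiE, Finset.card_erase_of_mem hx, Finset.card_erase_of_mem hxF]
    have h1 : 1 ≤ (F ∩ G).card := Finset.card_pos.mpr ⟨x, hx⟩
    have h2 : 1 ≤ F.card := Finset.card_pos.mpr ⟨x, hxF⟩
    omega

lemma adjFacets_insert {x : V} {F G : Finset V} (hxF : x ∉ F) (hxG : x ∉ G)
    (h : AdjFacets F G) : AdjFacets (insert x F) (insert x G) := by
  obtain ⟨hne, hcard, hint⟩ := h
  have hiE : insert x F ∩ insert x G = insert x (F ∩ G) := by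
    ext a; simp only [Finset.mem_inter, Finset.mem_insert]; tauto
  refine ⟨?_, ?_, ?_⟩
  · intro he
    apply hne
    have := congrArg (Finset.erase · x) he
    simpa [Finset.erase_insert, hxF, hxG] using this
  · rw [Finset.card_insert_of_notMem hxF, Finset.card_insert_of_notMem hxG, hcard]
  · rw [hiE, Finset.card_insert_of_notMem (fun hc => hxF (Finset.mem_inter.mp hc).1),
      Finset.card_insert_of_notMem hxF]
    omega

lemma normal_link {C : Finset (Finset V)} (hn : Normal C) (x : V) :
    Normal (link C x) := by
  intro f F hF G hG hfF hfG
  obtain ⟨F', hF', hxF', rfl⟩ := mem_link.mp hF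
  obtain ⟨G', hG', hxG', rfl⟩ := mem_link.mp hG
  have hxf : x ∉ f := fun hc => (Finset.mem_erase.mp (hfF hc)).1 rfl
  have hfF' : insert x f ⊆ F' := Finset.insert_subset hxF'
    ((Finset.subset_insert _ _).trans (Finset.insert_subset_insert _ hfF) |>.trans
      (by rw [Finset.insert_erase hxF']))
  have hfG' : insert x f ⊆ G' := Finset.insert_subset hxG'
    ((Finset.subset_insert _ _).trans (Finset.insert_subset_insert _ hfG) |>.trans
      (by rw [Finset.insert_erase hxG']))
  obtain ⟨P, hhead, hlast, hmem, hchain⟩ := hn (insert x f) F' hF' G' hG' hfF' hfG'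
  refine ⟨P.map (Finset.erase · x), ?_, ?_, ?_, ?_⟩
  · rw [List.head?_map, hhead]; rfl
  · rw [List.getLast?_map, hlast]; rfl
  · intro H hH
    obtain ⟨H', hH', rfl⟩ := List.mem_map.mp hH
    obtain ⟨hH'C, hfH'⟩ := hmem H' hH'
    have hxH' : x ∈ H' := hfH' (Finset.mem_insert_self _ _)
    refine ⟨mem_link_of_mem hH'C hxH', ?_⟩
    exact Finset.subset_erase.mpr ⟨(Finset.subset_insert x f).trans hfH', hxf⟩
  · refine chain'_map_mem _ (fun a ha b hb hab => ?_) hchain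
    exact adjFacets_erase ((hmem a ha).2 (Finset.mem_insert_self _ _))
      ((hmem b hb).2 (Finset.mem_insert_self _ _)) hab


section Vdist

variable {C : Finset (Finset V)}

lemma skeleton_adj {F : Finset V} (hF : F ∈ C) {u v : V} (hu : u ∈ F) (hv : v ∈ F)
    (hne : u ≠ v) : (skeleton C).Adj u v := ⟨hne, F, hF, hu, hv⟩

lemma vdist_eq_inf (h : ¬ C.sup Finset.card ≤ 1) (A B : Finset V) :
    vdistSets C A B = A.inf fun u => B.inf fun v => (skeleton C).edist u v := by
  rw [vdistSets, if_neg h]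
  rw [Finset.inf_eq_iInf]
  exact iInf_congr fun u => iInf_congr fun _ => (Finset.inf_eq_iInf _ _).symm

lemma vdist_singleton (h : ¬ C.sup Finset.card ≤ 1) (x : V) (B : Finset V) :
    vdistSets C {x} B = B.inf fun v => (skeleton C).edist x v := by
  rw [vdist_eq_inf h, Finset.inf_singleton]

lemma vdist_le_of_mem (h : ¬ C.sup Finset.card ≤ 1) {x : V} {A B : Finset V} (hx : x ∈ A) :
    vdistSets C A B ≤ vdistSets C {x} B := by
  rw [vdist_eq_inf h, vdist_singleton h]
  exact Finset.inf_le hx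

lemma le_vdist (h : ¬ C.sup Finset.card ≤ 1) {A B : Finset V} {c : ℕ∞}
    (H : ∀ x ∈ A, c ≤ vdistSets C {x} B) : c ≤ vdistSets C A B := by
  rw [vdist_eq_inf h]
  exact Finset.le_inf fun x hx => by rw [← vdist_singleton h]; exact H x hx

lemma vdist_exists_min (h : ¬ C.sup Finset.card ≤ 1) {A : Finset V} (B : Finset V)
    (hA : A.Nonempty) : ∃ x ∈ A, vdistSets C A B = vdistSets C {x} B := by
  obtain ⟨x, hx, hmin⟩ := Finset.exists_mem_eq_inf A hA
    (fun u => B.inf fun v => (skeleton C).edist u v)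
  exact ⟨x, hx, by rw [vdist_eq_inf h, vdist_singleton h, hmin]⟩

lemma vdist_singleton_le (h : ¬ C.sup Finset.card ≤ 1) {x s : V} {B : Finset V} (hs : s ∈ B) :
    vdistSets C {x} B ≤ (skeleton C).edist x s := by
  rw [vdist_singleton h]
  exact Finset.inf_le hs

lemma vdist_singleton_exists (h : ¬ C.sup Finset.card ≤ 1) {x : V} {B : Finset V}
    (hB : B.Nonempty) : ∃ s ∈ B, vdistSets C {x} B = (skeleton C).edist x s := by
  obtain ⟨s, hs, hmin⟩ := Finset.exists_mem_eq_inf B hB (fun v => (skeleton C).edist x v)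
  exact ⟨s, hs, by rw [vdist_singleton h, hmin]⟩

lemma vdist_zero_of_mem (h : ¬ C.sup Finset.card ≤ 1) {x : V} {B : Finset V} (hx : x ∈ B) :
    vdistSets C {x} B = 0 := by
  refine le_antisymm ?_ zero_le
  have := vdist_singleton_le h (x := x) hx
  simpa [SimpleGraph.edist_self] using this

lemma vdist_triangle (h : ¬ C.sup Finset.card ≤ 1) {u w : V} {B : Finset V}
    (hadj : (skeleton C).Adj u w) : vdistSets C {u} B ≤ vdistSets C {w} B + 1 := by
  rcases B.eq_empty_or_nonempty with rfl | hB
  · simp [vdist_singleton h]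
  · obtain ⟨s, hs, hws⟩ := vdist_singleton_exists h (x := w) hB
    calc vdistSets C {u} B ≤ (skeleton C).edist u s := vdist_singleton_le h hs
    _ ≤ (skeleton C).edist u w + (skeleton C).edist w s := SimpleGraph.edist_triangle
    _ = vdistSets C {w} B + 1 := by
        rw [SimpleGraph.edist_eq_one_iff_adj.mpr hadj, hws, add_comm]

lemma reach_aux (hC : ∀ H ∈ C, 2 ≤ H.card) :
    ∀ (P : List (Finset V)), P.Chain' AdjFacets → (∀ H ∈ P, H ∈ C) →
    ∀ {F u}, P.head? = some F → u ∈ F → ∀ {H v}, H ∈ P → v ∈ H →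
    (skeleton C).Reachable u v := by
  intro P
  induction P with
  | nil => intro _ _ F u hF; simp at hF
  | cons F' rest ih =>
    intro hchain hmem F u hF hu H v hH hv
    rw [List.head?_cons, Option.some_inj] at hF
    subst hF
    rcases List.mem_cons.mp hH with rfl | hH
    · rcases eq_or_ne u v with rfl | hne
      · exact SimpleGraph.Reachable.refl u
      · exact (skeleton_adj (hmem H (by simp)) hu hv hne).reachable
    · cases rest with
      | nil => simp at hH
      | cons G t =>
        have hadj : AdjFacets F' G := (List.isChain_cons_cons.mp hchain).1
        have hcap : (F' ∩ G).Nonempty := by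
          refine Finset.card_pos.mp ?_
          have := hadj.2.2
          have h2 := hC F' (hmem F' (by simp))
          omega
        obtain ⟨c, hc⟩ := hcap
        have hc1 : c ∈ F' := (Finset.mem_inter.mp hc).1
        have hc2 : c ∈ G := (Finset.mem_inter.mp hc).2
        have r1 : (skeleton C).Reachable u c := by
          rcases eq_or_ne u c with rfl | hne
          · exact SimpleGraph.Reachable.refl u
          · exact (skeleton_adj (hmem F' (by simp)) hu hc1 hne).reachable
        have r2 : (skeleton C).Reachable c v :=
          ih (List.isChain_cons_cons.mp hchain).2 (fun H hH => hmem H (by simp [hH]))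
            rfl hc2 hH hv
        exact r1.trans r2

lemma reachable_of_normal {d : ℕ} (hpure : Pure C d) (hnorm : Normal C) (hd : 2 ≤ d)
    {u v : V} (hu : u ∈ verts C) (hv : v ∈ verts C) :
    (skeleton C).Reachable u v := by
  obtain ⟨F, hF, huF⟩ := mem_verts.mp hu
  obtain ⟨G, hG, hvG⟩ := mem_verts.mp hv
  obtain ⟨P, hhead, hlast, hmem, hchain⟩ := hnorm ∅ F hF G hG (by simp) (by simp)
  exact reach_aux (fun H hH => by rw [hpure H hH]; exact hd) P hchain
    (fun H hH => (hmem H hH).1) hhead huF (List.mem_of_getLast? hlast) hvG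

lemma vdist_le_nat {d : ℕ} (hpure : Pure C d) (hnorm : Normal C)
    {A B : Finset V} (hA : A.Nonempty) (hB : B.Nonempty)
    (hAv : A ⊆ verts C) (hBv : B ⊆ verts C) :
    ∃ n : ℕ, vdistSets C A B ≤ (n : ℕ∞) := by
  by_cases h : C.sup Finset.card ≤ 1
  · refine ⟨1, ?_⟩
    rw [vdistSets, if_pos h, if_pos ⟨hA, hB⟩]
    split <;> simp
  · have hd2 : 2 ≤ d := by
      rw [not_le] at h
      obtain ⟨F, hF, hcF⟩ := Finset.lt_sup_iff.mp h
      rw [hpure F hF] at hcF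
      omega
    obtain ⟨u, hu⟩ := hA
    obtain ⟨s, hs⟩ := hB
    have hreach : (skeleton C).Reachable u s :=
      reachable_of_normal hpure hnorm hd2 (hAv hu) (hBv hs)
    have hne : (skeleton C).edist u s ≠ ⊤ := SimpleGraph.edist_ne_top_iff_reachable.mpr hreach
    refine ⟨((skeleton C).edist u s).toNat, ?_⟩
    calc vdistSets C A B ≤ vdistSets C {u} B := vdist_le_of_mem h hu
    _ ≤ (skeleton C).edist u s := vdist_singleton_le h hs
    _ = _ := (ENat.coe_toNat hne).symm

lemma vdist_zero_iff (h : ¬ C.sup Finset.card ≤ 1) {A B : Finset V}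
    (hA : A.Nonempty) (hB : B.Nonempty) (h0 : vdistSets C A B = 0) :
    (A ∩ B).Nonempty := by
  obtain ⟨x, hx, hxe⟩ := vdist_exists_min h B hA
  rw [hxe] at h0
  obtain ⟨s, hs, hse⟩ := vdist_singleton_exists h (x := x) hB
  rw [hse] at h0
  rcases SimpleGraph.edist_eq_zero_iff.mp h0
  exact ⟨x, Finset.mem_inter.mpr ⟨hx, hs⟩⟩

end Vdist


section More

variable {C : Finset (Finset V)}

@[simp] lemma admissible_nil {T : Finset V} : Admissible C [] T := by
  rw [Admissible]; trivial

lemma admissible_cons {x : V} {l : List V} {T : Finset V} :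
    Admissible C (x :: l) T ↔
      (vdistSets C {x} T = vdistSets C (x :: l).toFinset T ∧
        Admissible (link C x) l (targetSet C x T)) := by
  rw [Admissible]

lemma distVector_cons {x : V} {l : List V} {T : Finset V} :
    distVector C (x :: l) T =
      vdistSets C {x} T :: distVector (link C x) l (targetSet C x T) := by
  rw [distVector]

lemma mem_verts_link_of_adj {x w : V} (hadj : (skeleton C).Adj x w) :
    w ∈ verts (link C x) := by
  obtain ⟨hne, F, hF, hxF, hwF⟩ := hadj
  exact mem_verts.mpr ⟨F.erase x, mem_link_of_mem hF hxF,
    Finset.mem_erase.mpr ⟨Ne.symm hne, hwF⟩⟩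

lemma adj_of_mem_verts_link {x w : V} (h : w ∈ verts (link C x)) :
    (skeleton C).Adj x w := by
  obtain ⟨G, hG, hwG⟩ := mem_verts.mp h
  have hxG := not_mem_of_mem_link hG
  exact ⟨fun e => hxG (e ▸ hwG), insert x G, insert_mem_of_mem_link hG,
    Finset.mem_insert_self _ _, Finset.mem_insert_of_mem hwG⟩

lemma exists_closer (h : ¬ C.sup Finset.card ≤ 1) {x : V} {S : Finset V} {m : ℕ}
    (hd : vdistSets C {x} S = ((m : ℕ∞) + 1)) :
    ∃ w, (skeleton C).Adj x w ∧ vdistSets C {w} S + 1 = vdistSets C {x} S ∧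
      vdistSets C {w} S = (m : ℕ∞) := by
  have hS : S.Nonempty := by
    rcases S.eq_empty_or_nonempty with rfl | hS
    · exfalso
      rw [vdist_singleton h, Finset.inf_empty] at hd
      have hne : ((m : ℕ∞) + 1) ≠ ⊤ := by
        rw [← Nat.cast_one, ← Nat.cast_add]
        exact ENat.coe_ne_top _
      exact hne hd.symm
    · exact hS
  obtain ⟨s, hs, hse⟩ := vdist_singleton_exists h (x := x) hS
  have hxs : (skeleton C).edist x s = ((m + 1 : ℕ) : ℕ∞) := by
    rw [← hse, hd]; push_cast; ring
  obtain ⟨p, hp⟩ := SimpleGraph.exists_walk_of_edist_eq_coe hxs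
  cases p with
  | nil => simp at hp
  | @cons _ w _ hadj q =>
    rw [SimpleGraph.Walk.length_cons] at hp
    have hq : (q.length : ℕ∞) = (m : ℕ∞) := by exact_mod_cast Nat.succ_injective hp
    have h1 : vdistSets C {w} S ≤ (m : ℕ∞) := by
      calc vdistSets C {w} S ≤ (skeleton C).edist w s := vdist_singleton_le h hs
      _ ≤ (q.length : ℕ∞) := SimpleGraph.edist_le q
      _ = (m : ℕ∞) := hq
    have h2 : vdistSets C {x} S ≤ vdistSets C {w} S + 1 := vdist_triangle h hadj
    have h3 : vdistSets C {w} S + 1 ≤ vdistSets C {x} S := by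
      rw [hd]
      exact add_le_add_left h1 1
    have heq : vdistSets C {w} S + 1 = vdistSets C {x} S := le_antisymm h3 h2
    refine ⟨w, hadj, heq, ?_⟩
    have : vdistSets C {w} S + 1 = (m : ℕ∞) + 1 := by rw [heq, hd]
    exact WithTop.add_right_cancel ENat.one_ne_top this

lemma insert_sdiff_insert' {x : V} {A B : Finset V} (hxA : x ∉ A) :
    insert x A \ insert x B = A \ B := by
  ext a
  simp only [Finset.mem_sdiff, Finset.mem_insert]
  constructor
  · rintro ⟨ha | ha, hb⟩
    · subst ha; tauto
    · exact ⟨ha, fun hc => hb (Or.inr hc)⟩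
  · rintro ⟨ha, hb⟩
    exact ⟨Or.inr ha, fun hc => by rcases hc with rfl | hc; exact hxA ha; exact hb hc⟩

lemma exists_getElem?_ne {L M : List V} (h : L ≠ M) : ∃ k : ℕ, L[k]? ≠ M[k]? := by
  by_contra h'
  push_neg at h'
  exact h (List.ext_getElem? h')

lemma stepIndex_cons_cons {x : V} {L M : List V} (h : L ≠ M) :
    stepIndex (x :: L) (x :: M) = stepIndex L M + 1 := by
  have hne : {k : ℕ | L[k]? ≠ M[k]?}.Nonempty := exists_getElem?_ne h
  have hmem : sInf {k : ℕ | L[k]? ≠ M[k]?} ∈ {k : ℕ | L[k]? ≠ M[k]?} := Nat.sInf_mem hne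
  have hiff : ∀ k : ℕ, (x :: L)[k]? ≠ (x :: M)[k]? ↔ ∃ j, L[j]? ≠ M[j]? ∧ k = j + 1 := by
    intro k
    cases k with
    | zero => simp
    | succ j => simp [List.getElem?_cons_succ]
  rw [stepIndex]
  apply le_antisymm
  · exact Nat.sInf_le ((hiff _).mpr ⟨_, hmem, rfl⟩)
  · have hne2 : {k : ℕ | (x :: L)[k]? ≠ (x :: M)[k]?}.Nonempty :=
      ⟨stepIndex L M + 1, (hiff _).mpr ⟨_, hmem, rfl⟩⟩
    obtain ⟨j, hj, hje⟩ := (hiff _).mp (Nat.sInf_mem hne2)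
    rw [hje]
    exact Nat.succ_le_succ (Nat.sInf_le hj)

lemma stepIndex_cons_ne {x y : V} (h : x ≠ y) (L M : List V) :
    stepIndex (x :: L) (y :: M) = 0 :=
  Nat.sInf_eq_zero.mpr (Or.inl (by simp [h]))

lemma stepIndex_lt_of_ne {L M : List V} (h : L ≠ M) :
    stepIndex L M < max L.length M.length := by
  have hne : {k : ℕ | L[k]? ≠ M[k]?}.Nonempty := exists_getElem?_ne h
  have hmem := Nat.sInf_mem hne
  by_contra hge
  push_neg at hge
  have h1 : L[sInf {k : ℕ | L[k]? ≠ M[k]?}]? = none :=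
    List.getElem?_eq_none (le_trans (le_max_left _ _) hge)
  have h2 : M[sInf {k : ℕ | L[k]? ≠ M[k]?}]? = none :=
    List.getElem?_eq_none (le_trans (le_max_right _ _) hge)
  exact hmem (h1.trans h2.symm)

lemma exists_admissible :
    ∀ (k : ℕ) (C : Finset (Finset V)) (F : Finset V), F.card = k → F ∈ C →
    ∀ T : Finset V, ∃ L : List V, L.toFinset = F ∧ L.Nodup ∧ Admissible C L T := by
  intro k
  induction k with
  | zero =>
    intro C F hcard _ T
    refine ⟨[], ?_, List.nodup_nil, admissible_nil⟩
    simp [Finset.card_eq_zero.mp hcard]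
  | succ n ih =>
    intro C F hcard hF T
    have hmin : ∃ x ∈ F, vdistSets C {x} T = vdistSets C F T := by
      by_cases h : C.sup Finset.card ≤ 1
      · have hle : F.card ≤ 1 := le_trans (Finset.le_sup (f := Finset.card) hF) h
        have : F.card = 1 := by omega
        obtain ⟨x, rfl⟩ := Finset.card_eq_one.mp this
        exact ⟨x, by simp, rfl⟩
      · obtain ⟨x, hx, he⟩ := vdist_exists_min h T (Finset.card_pos.mp (by rw [hcard]; exact n.succ_pos))
        exact ⟨x, hx, he.symm⟩
    obtain ⟨x, hxF, hxe⟩ := hmin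
    have hlink : F.erase x ∈ link C x := mem_link_of_mem hF hxF
    have hcard' : (F.erase x).card = n := by
      rw [Finset.card_erase_of_mem hxF, hcard]
      omega
    obtain ⟨L', hL'f, hL'n, hL'a⟩ := ih (link C x) (F.erase x) hcard' hlink (targetSet C x T)
    refine ⟨x :: L', ?_, ?_, ?_⟩
    · rw [List.toFinset_cons, hL'f, Finset.insert_erase hxF]
    · exact List.nodup_cons.mpr ⟨fun hc => by
        have := List.mem_toFinset.mpr hc
        rw [hL'f] at this
        exact (Finset.mem_erase.mp this).1 rfl, hL'n⟩
    · rw [admissible_cons]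
      refine ⟨?_, hL'a⟩
      rw [List.toFinset_cons, hL'f, Finset.insert_erase hxF]
      exact hxe

end More

end MCP

namespace MCP

variable {V : Type} [DecidableEq V] [Fintype V]

set_option linter.unusedSectionVars false
set_option maxHeartbeats 1000000

lemma main (d : ℕ) : ∀ (n : ℕ) (C : Finset (Finset V)) (S : Finset V) (F₀ : List V),
    Pure C d → Normal C → S.Nonempty → S ⊆ verts C →
    IsOrderedFacet C F₀ → Admissible C F₀ S →
    vdistSets C F₀.toFinset S ≤ (n : ℕ∞) →
    ∃ Γ : List (List V), MonoConsPath C S Γ ∧ Γ.head? = some F₀ ∧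
      (∀ L ∈ Γ.dropLast, L.toFinset ∩ S = ∅) ∧
      ∃ L, Γ.getLast? = some L ∧ (L.toFinset ∩ S).Nonempty := by
  induction d using Nat.strong_induction_on with
  | _ d IHd =>
  intro n
  induction n using Nat.strong_induction_on with
  | _ n IHn =>
  intro C S F₀ hpure hnorm hS hSv hOF hadm hdist
  by_cases hmeet : (F₀.toFinset ∩ S).Nonempty
  · refine ⟨[F₀], ⟨⟨?_, List.isChain_singleton _⟩, List.isChain_singleton _,
      ?_, List.isChain_singleton _⟩, rfl, ?_, F₀, rfl, hmeet⟩
    · intro L hL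
      rw [List.mem_singleton] at hL
      subst hL; exact hOF
    · intro L hL
      rw [List.head?_cons, Option.mem_some_iff] at hL
      subst hL; exact hadm
    · intro L hL; simp at hL
  have hdisj : F₀.toFinset ∩ S = ∅ := Finset.not_nonempty_iff_eq_empty.mp hmeet
  obtain ⟨s0, hs0⟩ := hS
  obtain ⟨Fs, hFs, hsFs⟩ := mem_verts.mp (hSv hs0)
  have hd1 : 1 ≤ d := by
    have h1 := hpure Fs hFs
    have h2 : 0 < Fs.card := Finset.card_pos.mpr ⟨s0, hsFs⟩
    omega
  have hcardF : F₀.toFinset.card = d := hpure _ hOF.2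
  have hlenF : F₀.length = d := by rw [← List.toFinset_card_of_nodup hOF.1]; exact hcardF
  rcases Nat.lt_or_ge d 2 with hd | hd2
  · -- d = 1
    have hd1' : d = 1 := by omega
    obtain ⟨x, rfl⟩ : ∃ x, F₀ = [x] := by
      cases F₀ with
      | nil => rw [List.length_nil] at hlenF; omega
      | cons a t =>
        cases t with
        | nil => exact ⟨a, rfl⟩
        | cons b t' => simp [hd1'] at hlenF
    have hxS : x ∉ S := fun hc => Finset.eq_empty_iff_forall_notMem.mp hdisj x
      (Finset.mem_inter.mpr ⟨by simp, hc⟩)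
    obtain ⟨a, ha⟩ := Finset.card_eq_one.mp (by rw [hpure Fs hFs]; omega)
    rw [ha, Finset.mem_singleton] at hsFs
    subst hsFs
    rw [ha] at hFs
    have hsup : C.sup Finset.card ≤ 1 := Finset.sup_le fun F hF => by rw [hpure F hF]; omega
    have hxs : x ≠ s0 := fun e => hxS (e ▸ hs0)
    have vdx : vdistSets C {x} S = 1 := by
      rw [vdistSets, if_pos hsup, if_pos ⟨Finset.singleton_nonempty x, ⟨s0, hs0⟩⟩,
        if_neg (by rw [Finset.singleton_inter_of_notMem hxS]; simp)]
    have vds : vdistSets C {s0} S = 0 := by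
      rw [vdistSets, if_pos hsup, if_pos ⟨Finset.singleton_nonempty s0, ⟨s0, hs0⟩⟩,
        if_pos ⟨s0, by simp [hs0]⟩]
    have hadj : AdjFacets ([x].toFinset) ([s0].toFinset) := by
      refine ⟨by simp [hxs], by simp, ?_⟩
      rw [show ([x]:List V).toFinset = {x} by simp, show ([s0]:List V).toFinset = {s0} by simp,
        Finset.singleton_inter_of_notMem (by simp [hxs]), Finset.card_empty,
        Finset.card_singleton]
    refine ⟨[[x], [s0]], ⟨⟨?_, ?_⟩, ?_, ?_, ?_⟩, rfl, ?_, [s0], rfl, ⟨s0, by simp [hs0]⟩⟩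
    · intro L hL
      rcases List.mem_cons.mp hL with rfl | hL
      · exact hOF
      · rw [List.mem_singleton] at hL; subst hL
        exact ⟨List.nodup_singleton _, by simpa using hFs⟩
    · exact List.isChain_pair.mpr hadj
    · refine List.isChain_pair.mpr ?_
      rw [distVector_cons, distVector_cons, distVector]
      exact List.Lex.rel (by rw [vds, vdx]; exact zero_lt_one)
    · intro L hL
      rw [List.head?_cons, Option.mem_some_iff] at hL
      subst hL; exact hadm
    · refine List.isChain_pair.mpr ⟨⟨x, rfl, ?_⟩, ?_, ?_⟩
      · have h1 : ([x]:List V).toFinset = {x} := by simp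
        have h2 : ([s0]:List V).toFinset = {s0} := by simp
        rw [h1, h2]
        ext b
        simp only [Finset.mem_sdiff, Finset.mem_singleton]
        constructor
        · exact fun h => h.1
        · rintro rfl; exact ⟨rfl, hxs⟩
      · rw [admissible_cons]
        exact ⟨by simp, admissible_nil⟩
      · intro M' hperm _
        rw [List.perm_singleton.mp hperm]
    · intro L hL
      simp only [List.dropLast, List.mem_singleton] at hL
      subst hL
      exact hdisj
  · -- d ≥ 2
    have hsup2 : ¬ C.sup Finset.card ≤ 1 := by
      intro hc
      have := le_trans (Finset.le_sup (f := Finset.card) hOF.2) hc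
      omega
    obtain ⟨v₁, rest, rfl⟩ : ∃ v₁ rest, F₀ = v₁ :: rest := by
      cases F₀ with
      | nil => rw [List.length_nil] at hlenF; omega
      | cons a t => exact ⟨a, t, rfl⟩
    have hFC := hOF.2
    rw [admissible_cons] at hadm
    obtain ⟨hadm1, hadm2⟩ := hadm
    set T' := targetSet C v₁ S with hT'
    set lk := link C v₁ with hlk
    have hv₁F : v₁ ∈ (v₁ :: rest).toFinset := by simp
    have hv₁S : v₁ ∉ S := fun hc => Finset.eq_empty_iff_forall_notMem.mp hdisj v₁
      (Finset.mem_inter.mpr ⟨hv₁F, hc⟩)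
    have hT'eq : T' = (verts lk).filter
        (fun w => vdistSets C {w} S + 1 = vdistSets C {v₁} S) := by
      rw [hT', targetSet, if_neg hv₁S]
    have hlamn : vdistSets C {v₁} S ≤ (n : ℕ∞) := by rw [hadm1]; exact hdist
    have hlam0 : vdistSets C {v₁} S ≠ 0 := by
      intro hc
      rw [hadm1] at hc
      have h0 := vdist_zero_iff hsup2 ⟨v₁, hv₁F⟩ ⟨s0, hs0⟩ hc
      rw [hdisj] at h0
      exact absurd h0 (by simp)
    have hlamtop : vdistSets C {v₁} S ≠ ⊤ := by
      intro hc
      rw [hc] at hlamn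
      exact ENat.coe_ne_top n (top_le_iff.mp hlamn)
    obtain ⟨k, hk⟩ := WithTop.ne_top_iff_exists.mp hlamtop
    have hk0 : k ≠ 0 := by rintro rfl; exact hlam0 hk.symm
    obtain ⟨m, rfl⟩ : ∃ m, k = m + 1 := ⟨k - 1, by omega⟩
    have hm : vdistSets C {v₁} S = (m : ℕ∞) + 1 := by
      rw [← hk]; exact_mod_cast rfl
    have hmn : m < n := by
      rw [hm] at hlamn
      have : ((m + 1 : ℕ) : ℕ∞) ≤ (n : ℕ∞) := by push_cast; exact hlamn
      exact_mod_cast Nat.lt_of_succ_le (by exact_mod_cast this)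
    -- closer vertex
    obtain ⟨w, hwadj, hwp1, hwm⟩ := exists_closer hsup2 hm
    have hwT' : w ∈ T' := by
      rw [hT'eq, Finset.mem_filter]
      exact ⟨mem_verts_link_of_adj hwadj, hwp1⟩
    have hT'ne : T'.Nonempty := ⟨w, hwT'⟩
    have hT'sub : T' ⊆ verts lk := by rw [hT'eq]; exact Finset.filter_subset _ _
    -- link properties
    have hlkpure : Pure lk (d - 1) := pure_link hpure v₁
    have hlknorm : Normal lk := normal_link hnorm v₁
    have hvrest : v₁ ∉ rest := (List.nodup_cons.mp hOF.1).1
    have hvrestf : v₁ ∉ rest.toFinset := by simpa using hvrest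
    have hrestf : rest.toFinset = (v₁ :: rest).toFinset.erase v₁ := by
      rw [List.toFinset_cons, Finset.erase_insert hvrestf]
    have hrestlk : rest.toFinset ∈ lk := by
      rw [hrestf]; exact mem_link_of_mem hFC hv₁F
    have hrestOF : IsOrderedFacet lk rest := ⟨(List.nodup_cons.mp hOF.1).2, hrestlk⟩
    have hrestne : rest.toFinset.Nonempty := by
      refine Finset.card_pos.mp ?_
      rw [hlkpure _ hrestlk]
      omega
    obtain ⟨n', hn'⟩ := vdist_le_nat hlkpure hlknorm hrestne hT'ne
      (fun a ha => mem_verts.mpr ⟨rest.toFinset, hrestlk, ha⟩) hT'sub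
    obtain ⟨Γ', hΓ'mcp, hΓ'head, hΓ'drop, Mk, hΓ'last, hMkT'⟩ :=
      IHd (d - 1) (by omega) n' lk T' rest hlkpure hlknorm hT'ne hT'sub hrestOF hadm2 hn'
    obtain ⟨⟨hΓ'mem, hΓ'chain⟩, hΓ'mono, hΓ'headadm, hΓ'conschain⟩ := hΓ'mcp
    -- helper facts
    have hcloser : ∀ u ∈ T', vdistSets C {u} S = (m : ℕ∞) := by
      intro u hu
      rw [hT'eq, Finset.mem_filter] at hu
      have h2 := hu.2
      rw [hm] at h2
      exact WithTop.add_right_cancel ENat.one_ne_top h2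
    have hfar : ∀ G ∈ lk, G ∩ T' = ∅ → ∀ u ∈ G,
        vdistSets C {v₁} S ≤ vdistSets C {u} S := by
      intro G hG hGT u hu
      have huv : u ∈ verts lk := mem_verts.mpr ⟨G, hG, hu⟩
      have hadj := adj_of_mem_verts_link huv
      have htri : vdistSets C {v₁} S ≤ vdistSets C {u} S + 1 := vdist_triangle hsup2 hadj
      rcases eq_or_lt_of_le htri with heq | hlt
      · exfalso
        have huT : u ∈ T' := by rw [hT'eq, Finset.mem_filter]; exact ⟨huv, heq.symm⟩
        exact Finset.eq_empty_iff_forall_notMem.mp hGT u (Finset.mem_inter.mpr ⟨hu, huT⟩)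
      · rcases eq_or_ne (vdistSets C {u} S) ⊤ with htop | htop
        · rw [htop]; exact le_top
        · exact (ENat.lt_add_one_iff htop).mp hlt
    have hlift_dist : ∀ G ∈ lk, G ∩ T' = ∅ →
        vdistSets C (insert v₁ G) S = vdistSets C {v₁} S := by
      intro G hG hGT
      refine le_antisymm (vdist_le_of_mem hsup2 (Finset.mem_insert_self _ _)) ?_
      refine le_vdist hsup2 fun u hu => ?_
      rcases Finset.mem_insert.mp hu with rfl | hu
      · exact le_refl _
      · exact hfar G hG hGT u hu
    have hlift_disj : ∀ G ∈ lk, G ∩ T' = ∅ → (insert v₁ G) ∩ S = ∅ := by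
      intro G hG hGT
      rw [Finset.eq_empty_iff_forall_notMem]
      intro a ha
      obtain ⟨ha1, ha2⟩ := Finset.mem_inter.mp ha
      rcases Finset.mem_insert.mp ha1 with rfl | ha1
      · exact hv₁S ha2
      · have h0 : vdistSets C {a} S = 0 := vdist_zero_of_mem hsup2 ha2
        have hge := hfar G hG hGT a ha1
        rw [h0, hm] at hge
        simp at hge
    -- split Γ'
    have hΓ'ne : Γ' ≠ [] := by intro hc; rw [hc] at hΓ'head; simp at hΓ'head
    set A := Γ'.dropLast with hA
    have hMkeq : Mk = Γ'.getLast hΓ'ne := by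
      rw [List.getLast?_eq_getLast hΓ'ne, Option.some_inj] at hΓ'last
      exact hΓ'last.symm
    have hsplit : A ++ [Mk] = Γ' := by rw [hA, hMkeq]; exact List.dropLast_concat_getLast hΓ'ne
    have hAfacts : ∀ a ∈ A, a.toFinset ∈ lk ∧ a.toFinset ∩ T' = ∅ ∧ a.Nodup ∧ a ≠ [] := by
      intro a ha
      have hOFa := hΓ'mem a ((List.dropLast_sublist Γ').subset ha)
      have hlena : a.length = d - 1 := by
        rw [← List.toFinset_card_of_nodup hOFa.1, hlkpure _ hOFa.2]
      refine ⟨hOFa.2, hΓ'drop a ha, hOFa.1, ?_⟩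
      intro hc
      rw [hc] at hlena
      simp at hlena
      omega
    have hMkOF : IsOrderedFacet lk Mk := hΓ'mem Mk (by rw [← hsplit]; simp)
    have hvMk : v₁ ∉ Mk.toFinset := not_mem_of_mem_link hMkOF.2
    have hAne : A ≠ [] := by
      intro hc
      rw [hc, List.nil_append] at hsplit
      have hMkrest : Mk = rest := by
        rw [← hsplit, List.head?_cons, Option.some_inj] at hΓ'head
        exact hΓ'head
      obtain ⟨w', hw'⟩ := hMkT'
      obtain ⟨hw'1, hw'2⟩ := Finset.mem_inter.mp hw'
      have hw1' : w' ∈ (v₁ :: rest).toFinset := by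
        rw [List.toFinset_cons]
        refine Finset.mem_insert_of_mem ?_
        rw [← hMkrest]
        exact hw'1
      have hle : vdistSets C (v₁ :: rest).toFinset S ≤ (m : ℕ∞) := by
        calc vdistSets C (v₁ :: rest).toFinset S ≤ vdistSets C {w'} S :=
            vdist_le_of_mem hsup2 hw1'
          _ = (m : ℕ∞) := hcloser w' hw'2
      rw [← hadm1, hm] at hle
      have := (ENat.add_one_le_iff (ENat.coe_ne_top m)).mp hle
      exact lt_irrefl _ this
    -- junction data
    set Mk1 := A.getLast hAne with hMk1def
    have hlastA : A.getLast? = some Mk1 := List.getLast?_eq_getLast hAne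
    have hMk1A : Mk1 ∈ A := List.getLast_mem hAne
    obtain ⟨hMk1lk, hMk1T, hMk1n, hMk1ne⟩ := hAfacts Mk1 hMk1A
    have hvMk1 : v₁ ∉ Mk1.toFinset := not_mem_of_mem_link hMk1lk
    rw [← hsplit] at hΓ'chain hΓ'mono hΓ'conschain
    obtain ⟨hchA, -, hchJ⟩ := List.isChain_append.mp hΓ'chain
    obtain ⟨hmoA, -, hmoJ⟩ := List.isChain_append.mp hΓ'mono
    obtain ⟨hcoA, -, hcoJ⟩ := List.isChain_append.mp hΓ'conschain
    have hchJmk : AdjFacets Mk1.toFinset Mk.toFinset := by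
      refine hchJ Mk1 ?_ Mk rfl
      rw [hlastA]; rfl
    have hmoJmk : List.Lex (· < ·) (distVector lk Mk T') (distVector lk Mk1 T') := by
      refine hmoJ Mk1 ?_ Mk rfl
      rw [hlastA]; rfl
    have hcoJmk : ConservativeStep lk T' Mk1 Mk := by
      refine hcoJ Mk1 ?_ Mk rfl
      rw [hlastA]; rfl
    have hMk1Mkne : Mk1.toFinset ≠ Mk.toFinset := hchJmk.1
    -- the new facet and its admissible ordering of max index
    set Fk := insert v₁ Mk.toFinset with hFkdef
    have hFkC : Fk ∈ C := insert_mem_of_mem_link hMkOF.2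
    have hFkcard : Fk.card = d := hpure _ hFkC
    obtain ⟨L0, hL0f, hL0n, hL0a⟩ := exists_admissible d C Fk hFkcard hFkC S
    set Lprev := v₁ :: Mk1 with hLprevdef
    have hinsert_ne : insert v₁ Mk1.toFinset ≠ Fk := by
      intro hc
      apply hMk1Mkne
      have h2 := congrArg (fun t => Finset.erase t v₁) hc
      simpa [hFkdef, Finset.erase_insert hvMk1, Finset.erase_insert hvMk] using h2
    have hL0len : L0.length = d := by rw [← List.toFinset_card_of_nodup hL0n, hL0f, hFkcard]
    have hMk1len : Mk1.length = d - 1 := by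
      rw [← List.toFinset_card_of_nodup hMk1n, hlkpure _ hMk1lk]
    set s := {i : ℕ | ∃ M' : List V, M'.Perm L0 ∧ Admissible C M' S ∧ stepIndex Lprev M' = i}
      with hsdef
    have hsne : s.Nonempty := ⟨_, L0, List.Perm.refl _, hL0a, rfl⟩
    have hLprev_ne : ∀ M' : List V, M'.Perm L0 → Lprev ≠ M' := by
      intro M' hp hc
      apply hinsert_ne
      have : Lprev.toFinset = M'.toFinset := by rw [hc]
      rw [hLprevdef, List.toFinset_cons, List.toFinset_eq_of_perm _ _ hp, hL0f] at this
      exact this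
    have hbdd : BddAbove s := by
      refine ⟨d, fun i hi => ?_⟩
      obtain ⟨M', hp, ha, rfl⟩ := hi
      have hlenM' : M'.length = d := by rw [hp.length_eq, hL0len]
      have hlenLp : Lprev.length = d := by
        rw [hLprevdef, List.length_cons, hMk1len]; omega
      have hlt := stepIndex_lt_of_ne (hLprev_ne M' hp)
      rw [hlenLp, hlenM', max_self] at hlt
      omega
    have himax : sSup s ∈ s := Nat.sSup_mem hsne hbdd
    obtain ⟨Lk, hLkp, hLka, hLki⟩ := himax
    have hLkf : Lk.toFinset = Fk := by rw [List.toFinset_eq_of_perm _ _ hLkp, hL0f]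
    have hLkn : Lk.Nodup := hLkp.nodup_iff.mpr hL0n
    have hLkmax : ∀ M' : List V, M'.Perm Lk → Admissible C M' S →
        stepIndex Lprev M' ≤ stepIndex Lprev Lk := by
      intro M' hp ha
      rw [hLki]
      exact le_csSup hbdd ⟨M', hp.trans hLkp, ha, rfl⟩
    -- the lifted path
    have hheadA : A.head? = some rest := by
      have h := hΓ'head
      rw [← hsplit, List.head?_append] at h
      cases hA' : A.head? with
      | none => exact absurd (List.head?_eq_none_iff.mp hA') hAne
      | some a0 => rw [hA'] at h; simpa using h
    have hmapadj : (A.map (fun M : List V => v₁ :: M)).Chain'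
        (fun L M => AdjFacets L.toFinset M.toFinset) := by
      refine chain'_map_mem _ (fun a ha b hb hab => ?_) hchA
      rw [List.toFinset_cons, List.toFinset_cons]
      exact adjFacets_insert (not_mem_of_mem_link (hAfacts a ha).1)
        (not_mem_of_mem_link (hAfacts b hb).1) hab
    have hmaplast : (A.map (fun M : List V => v₁ :: M)).getLast? = some (v₁ :: Mk1) := by
      rw [List.getLast?_map, hlastA]
      rfl
    have hmapmono : (A.map (fun M : List V => v₁ :: M)).Chain'
        (fun L M => List.Lex (· < ·) (distVector C M S) (distVector C L S)) := by
      refine chain'_map_mem _ (fun a ha b hb hab => ?_) hmoA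
      rw [distVector_cons, distVector_cons]
      exact List.Lex.cons hab
    have hmapcons : (A.map (fun M : List V => v₁ :: M)).Chain' (ConservativeStep C S) := by
      refine chain'_map_mem _ (fun a ha b hb hab => ?_) hcoA
      obtain ⟨⟨x, hxlast, hxdiff⟩, hbadm, hbmax⟩ := hab
      obtain ⟨halk, haT, han, hane⟩ := hAfacts a ha
      obtain ⟨hblk, hbT, hbn, hbne⟩ := hAfacts b hb
      have hva : v₁ ∉ a.toFinset := not_mem_of_mem_link halk
      have hvb : v₁ ∉ b.toFinset := not_mem_of_mem_link hblk
      have habne : a.toFinset ≠ b.toFinset := by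
        intro hc
        have hx1 : x ∈ a.toFinset \ b.toFinset := by
          rw [hxdiff]; exact Finset.mem_singleton_self x
        rw [hc, Finset.sdiff_self] at hx1
        simp at hx1
      refine ⟨⟨x, ?_, ?_⟩, ?_, ?_⟩
      · rw [List.getLast?_cons, hxlast]
        rfl
      · rw [List.toFinset_cons, List.toFinset_cons, insert_sdiff_insert' hva, hxdiff]
      · rw [admissible_cons]
        refine ⟨?_, hbadm⟩
        rw [List.toFinset_cons, hlift_dist b.toFinset hblk hbT]
      · intro M' hperm hadm'
        cases M' with
        | nil =>
          have := hperm.length_eq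
          simp at this
        | cons u M'' =>
          rcases eq_or_ne u v₁ with rfl | hneu
          · have hperm' : M''.Perm b := hperm.cons_inv
            have hadm'' := (admissible_cons.mp hadm').2
            have h1 := hbmax M'' hperm' hadm''
            have hM''ne : a ≠ M'' := by
              intro hc
              apply habne
              rw [hc, List.toFinset_eq_of_perm _ _ hperm']
            have habne' : a ≠ b := fun hc => habne (by rw [hc])
            rw [stepIndex_cons_cons hM''ne, stepIndex_cons_cons habne']
            omega
          · rw [stepIndex_cons_ne (Ne.symm hneu)]
            exact Nat.zero_le _
    -- the final facet of the lifted path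
    have hLkne_nil : Lk ≠ [] := by
      intro hc
      rw [hc] at hLkf
      have : v₁ ∈ (([] : List V).toFinset) := by rw [hLkf, hFkdef]; exact Finset.mem_insert_self _ _
      simp at this
    obtain ⟨u0, Lk', hLkcons⟩ : ∃ u0 Lk', Lk = u0 :: Lk' := by
      cases Lk with
      | nil => exact absurd rfl hLkne_nil
      | cons u t => exact ⟨u, t, rfl⟩
    have hLkhead : vdistSets C {u0} S = vdistSets C Fk S := by
      have h := hLka
      rw [hLkcons, admissible_cons] at h
      rw [h.1, ← hLkf, hLkcons]
    have hFkle : vdistSets C Fk S ≤ (m : ℕ∞) := by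
      obtain ⟨w', hw'⟩ := hMkT'
      obtain ⟨hw'1, hw'2⟩ := Finset.mem_inter.mp hw'
      calc vdistSets C Fk S ≤ vdistSets C {w'} S :=
          vdist_le_of_mem hsup2 (Finset.mem_insert_of_mem hw'1)
        _ = (m : ℕ∞) := hcloser w' hw'2
    have hjun_mono : List.Lex (· < ·) (distVector C Lk S) (distVector C (v₁ :: Mk1) S) := by
      rw [hLkcons, distVector_cons, distVector_cons]
      refine List.Lex.rel ?_
      calc vdistSets C {u0} S ≤ (m : ℕ∞) := by rw [hLkhead]; exact hFkle
        _ < vdistSets C {v₁} S := by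
          rw [hm]
          exact (ENat.lt_add_one_iff (ENat.coe_ne_top m)).mpr (le_refl _)
    have hjun_adj : AdjFacets (v₁ :: Mk1).toFinset Lk.toFinset := by
      rw [List.toFinset_cons, hLkf, hFkdef]
      exact adjFacets_insert hvMk1 hvMk hchJmk
    have hjun_cons : ConservativeStep C S (v₁ :: Mk1) Lk := by
      obtain ⟨⟨x, hxlast, hxdiff⟩, -, -⟩ := hcoJmk
      refine ⟨⟨x, ?_, ?_⟩, hLka, hLkmax⟩
      · rw [List.getLast?_cons, hxlast]
        rfl
      · rw [List.toFinset_cons, hLkf, hFkdef, insert_sdiff_insert' hvMk1, hxdiff]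
    set Γ₁ := A.map (fun M : List V => v₁ :: M) ++ [Lk] with hΓ₁def
    have hΓ₁last : Γ₁.getLast? = some Lk := List.getLast?_concat
    have hΓ₁head : Γ₁.head? = some (v₁ :: rest) := by
      rw [hΓ₁def, List.head?_append, List.head?_map, hheadA]
      rfl
    have hjunc : ∀ {R : List V → List V → Prop}, R (v₁ :: Mk1) Lk →
        (∀ x ∈ (A.map (fun M : List V => v₁ :: M)).getLast?, ∀ y ∈ [Lk].head?, R x y) := by
      intro R hR x hx y hy
      rw [hmaplast, Option.mem_some_iff] at hx
      rw [List.head?_cons, Option.mem_some_iff] at hy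
      rw [← hx, ← hy]
      exact hR
    have hΓ₁adj : Γ₁.Chain' (fun L M => AdjFacets L.toFinset M.toFinset) :=
      List.isChain_append.mpr ⟨hmapadj, List.isChain_singleton _, hjunc hjun_adj⟩
    have hΓ₁mono : Γ₁.Chain'
        (fun L M => List.Lex (· < ·) (distVector C M S) (distVector C L S)) :=
      List.isChain_append.mpr ⟨hmapmono, List.isChain_singleton _, hjunc hjun_mono⟩
    have hΓ₁cons : Γ₁.Chain' (ConservativeStep C S) :=
      List.isChain_append.mpr ⟨hmapcons, List.isChain_singleton _, hjunc hjun_cons⟩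
    -- recursive call
    have hLkdist : vdistSets C Lk.toFinset S ≤ (m : ℕ∞) := by rw [hLkf]; exact hFkle
    obtain ⟨Γ₂, hΓ₂mcp, hΓ₂head, hΓ₂drop, Lfin, hΓ₂last, hLfin⟩ :=
      IHn m hmn C S Lk hpure hnorm ⟨s0, hs0⟩ hSv ⟨hLkn, by rw [hLkf]; exact hFkC⟩ hLka hLkdist
    obtain ⟨⟨hΓ₂mem, hΓ₂chain⟩, hΓ₂mono, hΓ₂headadm, hΓ₂conschain⟩ := hΓ₂mcp
    have hΓ₂eq : Γ₂ = Lk :: Γ₂.tail := by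
      cases Γ₂ with
      | nil => simp at hΓ₂head
      | cons a t =>
        rw [List.head?_cons, Option.some_inj] at hΓ₂head
        rw [List.tail_cons, hΓ₂head]
    have hmemΓ₁ : ∀ L ∈ Γ₁, IsOrderedFacet C L := by
      intro L hL
      rw [hΓ₁def, List.mem_append] at hL
      rcases hL with hL | hL
      · obtain ⟨a, ha, rfl⟩ := List.mem_map.mp hL
        obtain ⟨halk, -, han, -⟩ := hAfacts a ha
        refine ⟨List.nodup_cons.mpr ⟨fun hc => not_mem_of_mem_link halk
          (List.mem_toFinset.mpr hc), han⟩, ?_⟩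
        rw [List.toFinset_cons]
        exact insert_mem_of_mem_link halk
      · rw [List.mem_singleton] at hL
        subst hL
        exact ⟨hLkn, by rw [hLkf]; exact hFkC⟩
    -- assembling
    refine ⟨Γ₁ ++ Γ₂.tail, ⟨⟨?_, ?_⟩, ?_, ?_, ?_⟩, ?_, ?_, ?_⟩
    · -- all ordered facets
      intro L hL
      rcases List.mem_append.mp hL with hL | hL
      · exact hmemΓ₁ L hL
      · exact hΓ₂mem L ((List.tail_sublist Γ₂).subset hL)
    · -- dual chain
      refine List.isChain_append.mpr ⟨hΓ₁adj, ?_, ?_⟩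
      · have h := hΓ₂chain
        rw [hΓ₂eq] at h
        exact (List.isChain_cons.mp h).2
      · intro x hx y hy
        rw [hΓ₁last, Option.mem_some_iff] at hx
        rw [← hx]
        have h := hΓ₂chain
        rw [hΓ₂eq] at h
        exact (List.isChain_cons.mp h).1 y hy
    · -- monotone chain
      refine List.isChain_append.mpr ⟨hΓ₁mono, ?_, ?_⟩
      · have h := hΓ₂mono
        rw [hΓ₂eq] at h
        exact (List.isChain_cons.mp h).2
      · intro x hx y hy
        rw [hΓ₁last, Option.mem_some_iff] at hx
        rw [← hx]
        have h := hΓ₂mono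
        rw [hΓ₂eq] at h
        exact (List.isChain_cons.mp h).1 y hy
    · -- conservative head
      intro L hL
      rw [List.head?_append, hΓ₁head, Option.some_or, Option.mem_some_iff] at hL
      rw [← hL]
      exact admissible_cons.mpr ⟨hadm1, hadm2⟩
    · -- conservative chain
      refine List.isChain_append.mpr ⟨hΓ₁cons, ?_, ?_⟩
      · have h := hΓ₂conschain
        rw [hΓ₂eq] at h
        exact (List.isChain_cons.mp h).2
      · intro x hx y hy
        rw [hΓ₁last, Option.mem_some_iff] at hx
        rw [← hx]
        have h := hΓ₂conschain
        rw [hΓ₂eq] at h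
        exact (List.isChain_cons.mp h).1 y hy
    · -- head
      rw [List.head?_append, hΓ₁head, Option.some_or]
    · -- dropLast avoids S
      intro L hL
      rcases eq_or_ne Γ₂.tail [] with ht | ht
      · rw [ht, List.append_nil, hΓ₁def, List.dropLast_concat] at hL
        obtain ⟨a, ha, rfl⟩ := List.mem_map.mp hL
        obtain ⟨halk, haT, -, -⟩ := hAfacts a ha
        rw [List.toFinset_cons]
        exact hlift_disj a.toFinset halk haT
      · rw [List.dropLast_append_of_ne_nil ht] at hL
        rcases List.mem_append.mp hL with hL | hL
        · rw [hΓ₁def, List.mem_append] at hL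
          rcases hL with hL | hL
          · obtain ⟨a, ha, rfl⟩ := List.mem_map.mp hL
            obtain ⟨halk, haT, -, -⟩ := hAfacts a ha
            rw [List.toFinset_cons]
            exact hlift_disj a.toFinset halk haT
          · rw [List.mem_singleton] at hL
            subst hL
            refine hΓ₂drop L ?_
            rw [hΓ₂eq, List.dropLast_cons_of_ne_nil ht]
            exact List.mem_cons_self
        · refine hΓ₂drop L ?_
          rw [hΓ₂eq, List.dropLast_cons_of_ne_nil ht]
          exact List.mem_cons_of_mem _ hL
    · -- last facet meets S
      rcases eq_or_ne Γ₂.tail [] with ht | ht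
      · refine ⟨Lfin, ?_, hLfin⟩
        rw [ht, List.append_nil, hΓ₁last]
        rw [hΓ₂eq, ht] at hΓ₂last
        simpa using hΓ₂last
      · refine ⟨Lfin, ?_, hLfin⟩
        rw [List.getLast?_append]
        have h2 : Γ₂.tail.getLast? = some Lfin := by
          rw [hΓ₂eq, List.getLast?_cons] at hΓ₂last
          cases h3 : Γ₂.tail.getLast? with
          | none => exact absurd (List.getLast?_eq_none_iff.mp h3) ht
          | some z => rw [h3] at hΓ₂last; simpa using hΓ₂last
        rw [h2]
        rfl

end MCP


open MCP in
/-- in a pure normal complex, from any admissibly ordered facet there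
is a monotone conservative path towards the nonempty target set `S` ending in a facet
that meets `S`. -/
theorem statement1 {V : Type} [DecidableEq V] [Fintype V] (d : ℕ)
    (C : Finset (Finset V)) (hpure : Pure C d) (hnormal : Normal C)
    (S : Finset V) (hS : S.Nonempty) (hSv : S ⊆ verts C)
    (F₀ : List V) (hF₀ : IsOrderedFacet C F₀) (hadm : Admissible C F₀ S) :
    ∃ Γ : List (List V), MonoConsPath C S Γ ∧ Γ.head? = some F₀ ∧
      ∃ L, Γ.getLast? = some L ∧ (L.toFinset ∩ S).Nonempty := by
  obtain ⟨s0, hs0⟩ := hS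
  obtain ⟨Fs, hFs, hsFs⟩ := mem_verts.mp (hSv hs0)
  have hd1 : 1 ≤ d := by
    have h1 := hpure Fs hFs
    have h2 : 0 < Fs.card := Finset.card_pos.mpr ⟨s0, hsFs⟩
    omega
  have hF₀ne : F₀.toFinset.Nonempty := by
    refine Finset.card_pos.mp ?_
    rw [hpure _ hF₀.2]
    omega
  obtain ⟨n, hn⟩ := vdist_le_nat hpure hnormal hF₀ne ⟨s0, hs0⟩
    (fun a ha => mem_verts.mpr ⟨F₀.toFinset, hF₀.2, ha⟩) hSv
  obtain ⟨Γ, hmcp, hhead, -, L, hlast, hmeets⟩ :=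
    main d n C S F₀ hpure hnormal ⟨s0, hs0⟩ hSv hF₀ hadm hn
  exact ⟨Γ, hmcp, hhead, L, hlast, hmeets⟩
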